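/- Let Ĉ ⊆ ℤ × ℤ be such that its set of x-coordinates D = Ĉ_/ is finite. For c ∈ D write Ĉ(c) = {p ∈ Ĉ : p has x-coordinate c} and Line(c) = {(c, y) : y ∈ ℤ}. Suppose the columns Ĉ(c) that are finite are nonempty in number: enumerate them F̂₁, …, F̂_t (t ≥ 1, with distinct x-coordinates x(F̂₁), …, x(F̂_t)), and enumerate the infinite columns K̂₁, …, K̂_r (with distinct x-coordinates). Suppose for each i ∈ {1, …, r} there exist sets Ŝ_{i,1}, …, Ŝ_{i,nᵢ} ⊆ ℤ × ℤ with Ŝ_{i,1} ∪ ⋯ ∪ Ŝ_{i,nᵢ} = K̂ᵢ such that for each i, j there exist (possibly empty) subsets Ŵ_{i,j;μ} (1 ≤ μ ≤ t) and Û_{i,j;ν} (1 ≤ ν ≤ r) of ℤ × ℤ with Line(x(K̂ᵢ)) \ Ŝ_{i,j} = ⋃_{μ=1}^{t} (F̂_μ + Ŵ_{i,j;μ}) ∪ ⋃_{ν=1}^{r} (K̂_ν + Û_{i,j;ν}), where + denotes the coordinatewise Minkowski sum in ℤ × ℤ. Suppose further there exist W₀ ⊆ ℤ and integers a ≤ b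 with D + W₀ = {a, a+1, …, b}; set ℓ = b − a + 1. If m is a positive integer with m ≥ (ℓ + 1)·(t + n₁ + ⋯ + n_r), then C = π_m(Ĉ) arises as a minimal additive complement in ℤ. -/

import Mathlib

open Pointwise

/-- `C` is a minimal additive complement to `W` in `ℤ`. -/
def IsMAC (C W : Set ℤ) : Prop :=
  C + W = Set.univ ∧ ∀ C' : Set ℤ, C' ⊂ C → C' + W ≠ Set.univ

/-- `C` arises as a minimal additive complement in `ℤ`. -/
def ArisesAsMAC (C : Set ℤ) : Prop :=
  ∃ W : Set ℤ, IsMAC C W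

abbrev Gad (t r : ℕ) (n : Fin r → ℕ) := (Fin t) ⊕ ((i : Fin r) × Fin (n i))

lemma dvdSmall (m x : ℤ) (hm : 0 < m) (hd : m ∣ x) (hx : |x| < m) : x = 0 := by
  rcases hd with ⟨k, rfl⟩
  rcases eq_or_ne k 0 with rfl | hk
  · ring
  · exfalso
    have : m * 1 ≤ m * |k| :=
      mul_le_mul_of_nonneg_left (Int.one_le_abs (by omega)) (le_of_lt hm)
    rw [abs_mul, abs_of_pos hm] at hx
    omega
lemma kwon (F : Set ℤ) (hfin : F.Finite) (hne : F.Nonempty) :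
    ∃ V : Set ℤ, (∀ H : ℤ, ∃ y ∈ F, H - y ∈ V) ∧
      ∀ y ∈ F, ∃ ζ : ℤ, ζ - y ∈ V ∧ ∀ y' ∈ F, y' ≠ y → ζ - y' ∉ V := by
  classical
  set Ff : Finset ℤ := hfin.toFinset with hFf
  have hFfne : Ff.Nonempty := by simpa [hFf] using hne
  set lo : ℤ := Ff.min' hFfne
  set hi : ℤ := Ff.max' hFfne
  set M : ℤ := hi - lo with hM
  have hbnd : ∀ u ∈ F, ∀ v ∈ F, |u - v| ≤ M := by
    intro u hu v hv
    have h1 : u ≤ hi := Ff.le_max' u (by simpa [hFf] using hu)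
    have h2 : lo ≤ u := Ff.min'_le u (by simpa [hFf] using hu)
    have h3 : v ≤ hi := Ff.le_max' v (by simpa [hFf] using hv)
    have h4 : lo ≤ v := Ff.min'_le v (by simpa [hFf] using hv)
    rw [abs_le]; omega
  have hM0 : 0 ≤ M := by
    obtain ⟨y, hy⟩ := hne
    have := hbnd y hy y hy
    simp at this; omega
  set K : ℤ := 2 * M + 2 with hK
  set E : Set ℤ := {e | ∃ y ∈ F, ∃ y' ∈ F, y' ≠ y ∧ e = K * y - y'} with hE
  refine ⟨Eᶜ, ?_, ?_⟩
  · -- covering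
    intro H
    by_contra hcon
    push_neg at hcon
    simp only [Set.mem_compl_iff, not_not] at hcon
    have hch : ∀ y ∈ F, ∃ g ∈ F, ∃ h ∈ F, h ≠ g ∧ H - y = K * g - h := by
      intro y hy
      have := hcon y hy
      simpa [hE] using this
    choose g hg h hh hne' heq using hch
    obtain ⟨y₀, hy₀⟩ := hne
    have hgconst : ∀ y (hy : y ∈ F), g y hy = g y₀ hy₀ := by
      intro y hy
      have e1 := heq y hy
      have e2 := heq y₀ hy₀
      have hdiff : K * (g y hy - g y₀ hy₀) = (y₀ - y) + (h y hy - h y₀ hy₀) := by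
        linear_combination e2 - e1
      by_contra hneq
      have h1 : (1:ℤ) ≤ |g y hy - g y₀ hy₀| := Int.one_le_abs (by omega)
      have h3 : K ≤ |K * (g y hy - g y₀ hy₀)| := by
        rw [abs_mul, abs_of_pos (by omega : (0:ℤ) < K)]; nlinarith
      have h4 := hbnd y₀ hy₀ y hy
      have h5 := hbnd (h y hy) (hh y hy) (h y₀ hy₀) (hh y₀ hy₀)
      rw [hdiff] at h3
      rw [abs_le] at h4 h5
      have h6 : |(y₀ - y) + (h y hy - h y₀ hy₀)| ≤ M + M := by
        calc |(y₀ - y) + (h y hy - h y₀ hy₀)| ≤ |y₀ - y| + |h y hy - h y₀ hy₀| := abs_add_le _ _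
        _ ≤ M + M := by
            have := hbnd y₀ hy₀ y hy
            have := hbnd (h y hy) (hh y hy) (h y₀ hy₀) (hh y₀ hy₀)
            omega
      omega
    -- injection into erased finset
    set g₀ : ℤ := g y₀ hy₀ with hg₀
    have hg₀F : g₀ ∈ Ff := by simpa [hFf] using hg y₀ hy₀
    have hinj : ∀ y (hy : y ∈ F), h y hy = K * g₀ - H + y := by
      intro y hy
      have := heq y hy
      rw [hgconst y hy] at this
      linarith
    -- map φ : Ff → Ff.erase g₀
    have hmaps : ∀ y ∈ Ff, K * g₀ - H + y ∈ Ff.erase g₀ := by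
      intro y hy
      have hyF : y ∈ F := by simpa [hFf] using hy
      have h1 : h y hyF ∈ Ff.erase g₀ := by
        refine Finset.mem_erase.mpr ⟨?_, by simpa [hFf] using hh y hyF⟩
        rw [← hgconst y hyF]
        exact hne' y hyF
      rwa [hinj y hyF] at h1
    have hcard := Finset.card_le_card_of_injOn (fun y => K * g₀ - H + y) hmaps
      (fun x _ x' _ hxy => by simpa using hxy)
    rw [Finset.card_erase_of_mem hg₀F] at hcard
    have : 0 < Ff.card := Finset.card_pos.mpr hFfne
    omega
  · -- privacy
    intro y hy
    refine ⟨K * y, ?_, ?_⟩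
    · simp only [Set.mem_compl_iff, hE, Set.mem_setOf_eq]
      rintro ⟨yt, hyt, y', hy', hne2, heq2⟩
      have hdiff : K * (y - yt) = y - y' := by linear_combination heq2
      rcases eq_or_ne y yt with rfl | hneq
      · simp at hdiff; omega
      · have h1 : (1:ℤ) ≤ |y - yt| := Int.one_le_abs (by omega)
        have h3 : K ≤ |K * (y - yt)| := by
          rw [abs_mul, abs_of_pos (by omega : (0:ℤ) < K)]; nlinarith
        rw [hdiff] at h3
        have := hbnd y hy y' hy'
        omega
    · intro y' hy' hne2
      simp only [Set.mem_compl_iff, not_not, hE, Set.mem_setOf_eq]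
      exact ⟨y, hy, y', hy', hne2, rfl⟩


/-- The column of `Chat` at `x`-coordinate `c`. -/
def column (Chat : Set (ℤ × ℤ)) (c : ℤ) : Set (ℤ × ℤ) := {p ∈ Chat | p.1 = c}

/-- The full vertical line at `x`-coordinate `c`. -/
def line (c : ℤ) : Set (ℤ × ℤ) := {p : ℤ × ℤ | p.1 = c}

set_option maxHeartbeats 2000000 in
theorem pattern_set_cover_bound_implies_MAC
    (Chat : Set (ℤ × ℤ)) (hD : (Prod.fst '' Chat).Finite)
    (t r : ℕ) (ht : 1 ≤ t)
    (xF : Fin t → ℤ) (xK : Fin r → ℤ)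
    (hxF : Function.Injective xF) (hxK : Function.Injective xK)
    (hcols : Prod.fst '' Chat = Set.range xF ∪ Set.range xK)
    (hFfin : ∀ i, (column Chat (xF i)).Finite)
    (hFne : ∀ i, (column Chat (xF i)).Nonempty)
    (hKinf : ∀ i, (column Chat (xK i)).Infinite)
    (n : Fin r → ℕ)
    (S : (i : Fin r) → Fin (n i) → Set (ℤ × ℤ))
    (hScover : ∀ i, (⋃ j, S i j) = column Chat (xK i))
    (hScov : ∀ i j, ∃ (W : Fin t → Set (ℤ × ℤ)) (U : Fin r → Set (ℤ × ℤ)),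
      line (xK i) \ S i j =
        (⋃ μ, (column Chat (xF μ) + W μ)) ∪ (⋃ ν, (column Chat (xK ν) + U ν)))
    (W₀ : Set ℤ) (a b : ℤ) (hab : a ≤ b)
    (hW₀ : (Prod.fst '' Chat) + W₀ = Set.Icc a b)
    (m : ℤ) (hmpos : 0 < m)
    (hm : ((b - a + 1) + 1) * ((t : ℤ) + ∑ i, (n i : ℤ)) ≤ m) :
    ArisesAsMAC ((fun p : ℤ × ℤ => p.1 + m * p.2) '' Chat) := by
  classical
  choose WW UU hWU using hScov
  set L : ℤ := b - a + 1 with hLdef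
  have hL1 : 1 ≤ L := by omega
  have haI : a ∈ (Prod.fst '' Chat) + W₀ := by rw [hW₀]; exact Set.mem_Icc.mpr ⟨le_refl a, hab⟩
  obtain ⟨d₀, hd₀, w₀s, hw₀s, -⟩ := Set.mem_add.mp haI
  have hdiam : ∀ d ∈ Prod.fst '' Chat, a - w₀s ≤ d ∧ d ≤ b - w₀s := by
    intro d hd
    have : d + w₀s ∈ Set.Icc a b := by rw [← hW₀]; exact Set.add_mem_add hd hw₀s
    rw [Set.mem_Icc] at this; omega
  have hxFD : ∀ μ, xF μ ∈ Prod.fst '' Chat := by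
    intro μ; rw [hcols]; exact Or.inl ⟨μ, rfl⟩
  have hxKD : ∀ ν, xK ν ∈ Prod.fst '' Chat := by
    intro ν; rw [hcols]; exact Or.inr ⟨ν, rfl⟩
  have hpD : ∀ p ∈ Chat, p.1 ∈ Prod.fst '' Chat := fun p hp => ⟨p, hp, rfl⟩
  have hdd : ∀ d ∈ Prod.fst '' Chat, ∀ d' ∈ Prod.fst '' Chat, |d - d'| ≤ L - 1 := by
    intro d hd d' hd'
    have h1 := hdiam d hd
    have h2 := hdiam d' hd'
    rw [abs_le]; omega
  have hFy : ∀ μ : Fin t, ({y : ℤ | (xF μ, y) ∈ Chat}).Finite ∧ ({y : ℤ | (xF μ, y) ∈ Chat}).Nonempty := by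
    intro μ
    constructor
    · refine ((hFfin μ).image Prod.snd).subset ?_
      intro y hy
      exact ⟨(xF μ, y), ⟨hy, rfl⟩, rfl⟩
    · obtain ⟨p, hp, hp1⟩ := hFne μ
      refine ⟨p.2, ?_⟩
      show (xF μ, p.2) ∈ Chat
      rw [← hp1]
      simpa using hp
  choose V hVcov hVpriv using fun μ => kwon {y : ℤ | (xF μ, y) ∈ Chat} (hFy μ).1 (hFy μ).2
  set N : ℕ := t + ∑ i, n i with hNdef
  have hcardG : Fintype.card (Gad t r n) = N := by
    simp [Gad, hNdef, Fintype.card_sum, Fintype.card_sigma, Fintype.card_fin]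
  set e : Gad t r n ≃ Fin N := Fintype.equivFinOfCardEq hcardG with hedef
  set pos : Gad t r n → ℤ := fun g => ((e g : ℕ) : ℤ) * (L + 1) with hposdef
  have hNm : (N : ℤ) * (L + 1) ≤ m := by
    have hcast : ((N : ℕ) : ℤ) = (t : ℤ) + ∑ i, (n i : ℤ) := by
      rw [hNdef]; push_cast; ring
    calc (N : ℤ) * (L + 1) = (L + 1) * ((t : ℤ) + ∑ i, (n i : ℤ)) := by
          rw [hcast]; ring
      _ ≤ m := hm
  have posbound : ∀ g : Gad t r n, 0 ≤ pos g ∧ pos g ≤ ((N:ℤ) - 1) * (L+1) := by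
    intro g
    have h0 : ((e g : ℕ) : ℤ) < (N : ℤ) := by exact_mod_cast (e g).isLt
    constructor
    · show 0 ≤ ((e g : ℕ) : ℤ) * (L + 1)
      exact mul_nonneg (Int.natCast_nonneg _) (by omega)
    · show ((e g : ℕ) : ℤ) * (L + 1) ≤ ((N:ℤ) - 1) * (L+1)
      exact mul_le_mul_of_nonneg_right (by omega) (by omega)
  have hposm : ∀ g : Gad t r n, pos g ≤ m - 2 := by
    intro g
    have h1 := (posbound g).2
    have h2 : ((N:ℤ) - 1) * (L+1) + (L+1) = (N:ℤ)*(L+1) := by ring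
    omega
  have spill : ∀ (g g' : Gad t r n) (δ : ℤ), |δ| ≤ L - 1 →
      m ∣ (pos g' + δ - pos g) → g' = g ∧ δ = 0 := by
    intro g g' δ habs hdvd
    have h1 := posbound g
    have h2 := posbound g'
    have hδ := abs_le.mp habs
    have hPN : ((N:ℤ) - 1) * (L+1) + (L+1) = (N:ℤ)*(L+1) := by ring
    have h0 : pos g' + δ - pos g = 0 := by
      refine dvdSmall m _ hmpos hdvd ?_
      rw [abs_lt]
      constructor <;> linarith [h1.1, h1.2, h2.1, h2.2, hδ.1, hδ.2]
    have h0' : ((e g' : ℕ):ℤ) * (L+1) + δ - ((e g :ℕ):ℤ) * (L+1) = 0 := h0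
    have key : (((e g' : ℕ):ℤ) - ((e g :ℕ):ℤ)) * (L+1) = -δ := by linear_combination h0'
    by_cases hee : (e g' : ℕ) = (e g : ℕ)
    · have hgg : g' = g := e.injective (Fin.ext hee)
      refine ⟨hgg, ?_⟩
      rw [hee] at key
      simp at key
      omega
    · exfalso
      have hne0 : ((e g' : ℕ):ℤ) - ((e g :ℕ):ℤ) ≠ 0 := by
        intro hc
        exact hee (by exact_mod_cast sub_eq_zero.mp hc)
      have h3 : (1:ℤ) ≤ |((e g' : ℕ):ℤ) - ((e g :ℕ):ℤ)| := Int.one_le_abs hne0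
      have h4 : (L+1) ≤ |(((e g' : ℕ):ℤ) - ((e g :ℕ):ℤ)) * (L+1)| := by
        rw [abs_mul, abs_of_pos (by omega : (0:ℤ) < L+1)]
        nlinarith
      rw [key, abs_neg] at h4
      have := abs_le.mp habs
      have h5 : |δ| ≤ L - 1 := habs
      have h6 := le_abs_self δ
      have h7 := neg_abs_le δ
      omega
  have hgadfull : ∀ q : ℤ, 0 ≤ q → q ≤ (N:ℤ) - 1 → ∃ g : Gad t r n, pos g = q * (L+1) := by
    intro q hq0 hqN
    have hqnat : q.toNat < N := by omega
    refine ⟨e.symm ⟨q.toNat, hqnat⟩, ?_⟩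
    show ((e (e.symm ⟨q.toNat, hqnat⟩) : ℕ) : ℤ) * (L + 1) = q * (L+1)
    rw [Equiv.apply_symm_apply]
    simp [Int.toNat_of_nonneg hq0]
  have hN1 : 1 ≤ N := by rw [hNdef]; omega
  have hN1' : (1:ℤ) ≤ (N:ℤ) := by exact_mod_cast hN1
  have hPN0 : 0 ≤ ((N:ℤ) - 1) * (L+1) := mul_nonneg (by omega) (by omega)
  have window_exists : ∀ ρ : ℤ, 0 ≤ ρ → ρ < m → (∀ g : Gad t r n, pos g ≠ ρ) →
      ∃ τ : ℤ, (0 ≤ a + τ ∧ b + τ ≤ m - 1 ∧ ∀ g : Gad t r n, pos g < a + τ ∨ b + τ < pos g) ∧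
        a + τ ≤ ρ ∧ ρ ≤ b + τ := by
    intro ρ hρ0 hρm hno
    have hPN : ((N:ℤ) - 1) * (L+1) + (L+1) = (N:ℤ)*(L+1) := by ring
    by_cases hcase : ρ ≤ ((N:ℤ) - 1) * (L + 1)
    · set q : ℤ := ρ / (L + 1) with hqdef
      have hL0 : (0:ℤ) < L + 1 := by omega
      have hdm : (L + 1) * q + ρ % (L + 1) = ρ := Int.mul_ediv_add_emod ρ (L + 1)
      have hr0 : 0 ≤ ρ % (L + 1) := Int.emod_nonneg ρ (by omega)
      have hr1 : ρ % (L + 1) < L + 1 := Int.emod_lt_of_pos ρ hL0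
      have hq0 : 0 ≤ q := Int.ediv_nonneg hρ0 (by omega)
      have hqN : q ≤ (N:ℤ) - 1 := by
        by_contra hc
        push_neg at hc
        have h2 : (N:ℤ) * (L+1) ≤ q * (L+1) := mul_le_mul_of_nonneg_right (by omega) (by omega)
        linarith
      obtain ⟨g₀, hg₀⟩ := hgadfull q hq0 hqN
      have hrne : ρ % (L + 1) ≠ 0 := by
        intro h0
        refine hno g₀ ?_
        rw [hg₀]
        linarith
      have hr2 : (0:ℤ) < ρ % (L + 1) := lt_of_le_of_ne hr0 (Ne.symm hrne)
      have havoid : ∀ g : Gad t r n, pos g ≤ q * (L+1) ∨ q * (L+1) + (L+1) ≤ pos g := by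
        intro g
        rcases le_or_gt ((e g : ℕ) : ℤ) q with h | h
        · left
          show ((e g : ℕ) : ℤ) * (L + 1) ≤ q * (L+1)
          exact mul_le_mul_of_nonneg_right h (by omega)
        · right
          have h2 : (q + 1) * (L+1) ≤ ((e g : ℕ) : ℤ) * (L + 1) :=
            mul_le_mul_of_nonneg_right (by omega) (by omega)
          show q * (L+1) + (L+1) ≤ ((e g : ℕ) : ℤ) * (L + 1)
          linarith
      have hqP : q * (L+1) ≤ ((N:ℤ) - 1) * (L+1) := mul_le_mul_of_nonneg_right hqN (by omega)
      have hq00 : 0 ≤ q * (L+1) := mul_nonneg hq0 (by omega)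
      refine ⟨q * (L+1) + 1 - a, ⟨by linarith, by linarith, ?_⟩, by linarith, by linarith⟩
      intro g
      rcases havoid g with h | h
      · left; linarith
      · right; linarith
    · push_neg at hcase
      set s : ℤ := min ρ (m - L) with hsdef
      have hs1 : s ≤ ρ := min_le_left _ _
      have hs2 : s ≤ m - L := min_le_right _ _
      have hs3 : ((N:ℤ) - 1) * (L+1) + 1 ≤ s := by
        refine le_min (by linarith) (by linarith)
      have hs4 : ρ ≤ s + L - 1 := by
        rcases min_cases ρ (m - L) with ⟨h1, -⟩ | ⟨h1, -⟩
        · rw [hsdef, h1]; omega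
        · rw [hsdef, h1]; omega
      refine ⟨s - a, ⟨by linarith, by linarith, ?_⟩, by linarith, by linarith⟩
      intro g
      left
      have := (posbound g).2
      linarith
  -- the complement set
  set WgF : Fin t → Set ℤ := fun μ =>
    {w | ∃ v ∈ V μ, w = pos (Sum.inl μ) - xF μ + m * v} with hWgFdef
  set WgK : (i : Fin r) → Fin (n i) → Set ℤ := fun i j =>
    {w | w = pos (Sum.inr ⟨i, j⟩) - xK i ∨
      (∃ μ, ∃ u ∈ WW i j μ, w = u.1 + m * u.2 + (pos (Sum.inr ⟨i, j⟩) - xK i)) ∨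
      (∃ ν, ∃ u ∈ UU i j ν, w = u.1 + m * u.2 + (pos (Sum.inr ⟨i, j⟩) - xK i))} with hWgKdef
  set Win : Set ℤ :=
    {w | ∃ τ : ℤ, (0 ≤ a + τ ∧ b + τ ≤ m - 1 ∧ ∀ g : Gad t r n, pos g < a + τ ∨ b + τ < pos g) ∧
      ∃ w₀ ∈ W₀, ∃ v : ℤ, w = τ + w₀ + m * v} with hWindef
  set Wt : Set ℤ := (Win ∪ (⋃ μ, WgF μ)) ∪ (⋃ i, ⋃ j, WgK i j) with hWtdef
  have hWinSub : Win ⊆ Wt := fun w hw => Or.inl (Or.inl hw)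
  have hWgFSub : ∀ μ, WgF μ ⊆ Wt := fun μ w hw =>
    Or.inl (Or.inr (Set.mem_iUnion.mpr ⟨μ, hw⟩))
  have hWgKSub : ∀ i j, WgK i j ⊆ Wt := fun i j w hw =>
    Or.inr (Set.mem_iUnion.mpr ⟨i, Set.mem_iUnion.mpr ⟨j, hw⟩⟩)
  -- structure facts about WW and UU
  have hWWsub : ∀ i j μ, column Chat (xF μ) + WW i j μ ⊆ line (xK i) \ S i j := by
    intro i j μ
    rw [hWU i j]
    exact le_trans (Set.subset_iUnion (fun μ => column Chat (xF μ) + WW i j μ) μ) Set.subset_union_left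
  have hUUsub : ∀ i j ν, column Chat (xK ν) + UU i j ν ⊆ line (xK i) \ S i j := by
    intro i j ν
    rw [hWU i j]
    exact le_trans (Set.subset_iUnion (fun ν => column Chat (xK ν) + UU i j ν) ν) Set.subset_union_right
  have hWWfst : ∀ i j μ, ∀ u ∈ WW i j μ, u.1 = xK i - xF μ := by
    intro i j μ u hu
    obtain ⟨q₀, hq₀⟩ := hFne μ
    have h1 : q₀ + u ∈ line (xK i) \ S i j := hWWsub i j μ (Set.add_mem_add hq₀ hu)
    have h2 : (q₀ + u).1 = xK i := h1.1
    have h3 : q₀.1 = xF μ := hq₀.2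
    rw [Prod.fst_add, h3] at h2
    omega
  have hUUfst : ∀ i j ν, ∀ u ∈ UU i j ν, u.1 = xK i - xK ν := by
    intro i j ν u hu
    obtain ⟨q₀, hq₀⟩ := (hKinf ν).nonempty
    have h1 : q₀ + u ∈ line (xK i) \ S i j := hUUsub i j ν (Set.add_mem_add hq₀ hu)
    have h2 : (q₀ + u).1 = xK i := h1.1
    have h3 : q₀.1 = xK ν := hq₀.2
    rw [Prod.fst_add, h3] at h2
    omega
  have hSsubChat : ∀ i j, S i j ⊆ Chat := by
    intro i j p hp
    have : p ∈ ⋃ j, S i j := Set.mem_iUnion.mpr ⟨j, hp⟩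
    rw [hScover i] at this
    exact this.1
  refine ⟨Wt, ?_, ?_⟩
  · -- covering
    apply Set.eq_univ_of_forall
    intro z
    have hzd : z % m + m * (z / m) = z := Int.emod_add_mul_ediv z m
    set ρ : ℤ := z % m with hρdef
    set H : ℤ := z / m with hHdef
    have hρ0 : 0 ≤ ρ := Int.emod_nonneg z (by omega)
    have hρm : ρ < m := Int.emod_lt_of_pos z hmpos
    by_cases hex : ∃ g : Gad t r n, pos g = ρ
    · obtain ⟨g, hg⟩ := hex
      rcases g with μ | ⟨i, j⟩
      · -- finite gadget class
        obtain ⟨y, hyF, hyV⟩ := hVcov μ H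
        refine Set.mem_add.mpr ⟨xF μ + m * y, ⟨(xF μ, y), hyF, rfl⟩,
          pos (Sum.inl μ) - xF μ + m * (H - y), hWgFSub μ ⟨H - y, hyV, rfl⟩, ?_⟩
        rw [hg]
        linarith
      · -- pattern gadget class
        by_cases hPS : ((xK i, H) : ℤ × ℤ) ∈ S i j
        · refine Set.mem_add.mpr ⟨xK i + m * H, ⟨(xK i, H), hSsubChat i j hPS, rfl⟩,
            pos (Sum.inr ⟨i, j⟩) - xK i, hWgKSub i j (Or.inl rfl), ?_⟩
          rw [hg]
          linarith
        · have hline : ((xK i, H) : ℤ × ℤ) ∈ line (xK i) \ S i j := ⟨rfl, hPS⟩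
          rw [hWU i j] at hline
          rcases hline with hline | hline
          · obtain ⟨A, ⟨μ, rfl⟩, hmem⟩ := hline
            obtain ⟨p₁, hp₁, u, hu, hsum⟩ := Set.mem_add.mp hmem
            have h1 : p₁.1 + u.1 = xK i := by rw [← Prod.fst_add, hsum]
            have h2 : p₁.2 + u.2 = H := by rw [← Prod.snd_add, hsum]
            refine Set.mem_add.mpr ⟨p₁.1 + m * p₁.2, ⟨p₁, hp₁.1, rfl⟩,
              u.1 + m * u.2 + (pos (Sum.inr ⟨i, j⟩) - xK i),
              hWgKSub i j (Or.inr (Or.inl ⟨μ, u, hu, rfl⟩)), ?_⟩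
            rw [hg]
            have : p₁.1 + m * p₁.2 + (u.1 + m * u.2 + (ρ - xK i))
                = (p₁.1 + u.1 - xK i) + ρ + m * (p₁.2 + u.2) := by ring
            rw [this, h1, h2]
            simp
            linarith
          · obtain ⟨A, ⟨ν, rfl⟩, hmem⟩ := hline
            obtain ⟨p₁, hp₁, u, hu, hsum⟩ := Set.mem_add.mp hmem
            have h1 : p₁.1 + u.1 = xK i := by rw [← Prod.fst_add, hsum]
            have h2 : p₁.2 + u.2 = H := by rw [← Prod.snd_add, hsum]
            refine Set.mem_add.mpr ⟨p₁.1 + m * p₁.2, ⟨p₁, hp₁.1, rfl⟩,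
              u.1 + m * u.2 + (pos (Sum.inr ⟨i, j⟩) - xK i),
              hWgKSub i j (Or.inr (Or.inr ⟨ν, u, hu, rfl⟩)), ?_⟩
            rw [hg]
            have : p₁.1 + m * p₁.2 + (u.1 + m * u.2 + (ρ - xK i))
                = (p₁.1 + u.1 - xK i) + ρ + m * (p₁.2 + u.2) := by ring
            rw [this, h1, h2]
            simp
            linarith
    · push_neg at hex
      obtain ⟨τ, hτ, hτ1, hτ2⟩ := window_exists ρ hρ0 hρm hex
      have hρτ : ρ - τ ∈ (Prod.fst '' Chat) + W₀ := by
        rw [hW₀]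
        exact Set.mem_Icc.mpr ⟨by omega, by omega⟩
      obtain ⟨d, hd, w₀, hw₀, hsum⟩ := Set.mem_add.mp hρτ
      obtain ⟨p₁, hp₁, rfl⟩ := hd
      refine Set.mem_add.mpr ⟨p₁.1 + m * p₁.2, ⟨p₁, hp₁, rfl⟩,
        τ + w₀ + m * (H - p₁.2), hWinSub ⟨τ, hτ, w₀, hw₀, H - p₁.2, rfl⟩, ?_⟩
      linarith
  · -- minimality
    have hm0 : (m:ℤ) ≠ 0 := by omega
    have wstruct : ∀ w ∈ Wt, ∀ p' ∈ Chat, ∀ (g : Gad t r n) (ζ : ℤ),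
        p'.1 + m * p'.2 + w = pos g + m * ζ →
        (∃ μ, Sum.inl μ = g ∧ ∃ v ∈ V μ, p'.1 = xF μ ∧ ζ = p'.2 + v) ∨
        (∃ sg : (i : Fin r) × Fin (n i), Sum.inr sg = g ∧ p'.1 = xK sg.1 ∧ ζ = p'.2) ∨
        (∃ sg : (i : Fin r) × Fin (n i), Sum.inr sg = g ∧ ∃ u : ℤ × ℤ,
          p' + u ∈ line (xK sg.1) \ S sg.1 sg.2 ∧ ζ = (p' + u).2) := by
      intro w hw p' hp' g ζ heq
      rcases hw with (hw | hw) | hw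
      · -- window : impossible
        exfalso
        obtain ⟨τ, ⟨hτ1, hτ2, hτ3⟩, w₀, hw₀, v, rfl⟩ := hw
        have hdw : p'.1 + w₀ ∈ Set.Icc a b := by
          rw [← hW₀]; exact Set.add_mem_add (hpD p' hp') hw₀
        rw [Set.mem_Icc] at hdw
        have hd : m ∣ (p'.1 + w₀ + τ - pos g) := ⟨ζ - p'.2 - v, by linarith⟩
        have hb1 := (posbound g).1
        have hb2 := hposm g
        have h0 : p'.1 + w₀ + τ - pos g = 0 := by
          refine dvdSmall m _ hmpos hd ?_
          rw [abs_lt]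
          constructor <;> linarith
        rcases hτ3 g with h | h <;> linarith
      · -- finite gadget element
        rw [Set.mem_iUnion] at hw
        obtain ⟨μ', hw⟩ := hw
        obtain ⟨v, hvV, rfl⟩ := hw
        have hδ : |p'.1 - xF μ'| ≤ L - 1 := hdd _ (hpD p' hp') _ (hxFD μ')
        have hd : m ∣ (pos (Sum.inl μ') + (p'.1 - xF μ') - pos g) :=
          ⟨ζ - p'.2 - v, by linarith⟩
        obtain ⟨hg, hδ0⟩ := spill g (Sum.inl μ') (p'.1 - xF μ') hδ hd
        left
        refine ⟨μ', hg, v, hvV, by omega, ?_⟩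
        refine mul_left_cancel₀ hm0 (show m * ζ = m * (p'.2 + v) from ?_)
        rw [← hg] at heq
        have hpos0 : p'.1 = xF μ' := by omega
        linarith
      · -- pattern gadget element
        rw [Set.mem_iUnion] at hw
        obtain ⟨i', hw⟩ := hw
        rw [Set.mem_iUnion] at hw
        obtain ⟨j', hw⟩ := hw
        rcases hw with hbase | hWWb | hUUb
        · -- the base translate
          subst hbase
          have hδ : |p'.1 - xK i'| ≤ L - 1 := hdd _ (hpD p' hp') _ (hxKD i')
          have hd : m ∣ (pos (Sum.inr ⟨i', j'⟩) + (p'.1 - xK i') - pos g) :=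
            ⟨ζ - p'.2, by linarith⟩
          obtain ⟨hg, hδ0⟩ := spill g (Sum.inr ⟨i', j'⟩) (p'.1 - xK i') hδ hd
          right; left
          refine ⟨⟨i', j'⟩, hg, show p'.1 = xK i' by omega, ?_⟩
          refine mul_left_cancel₀ hm0 (show m * ζ = m * p'.2 from ?_)
          rw [← hg] at heq
          linarith
        · -- a translate of a finite column
          obtain ⟨μ'', u, hu, rfl⟩ := hWWb
          have hufst : u.1 = xK i' - xF μ'' := hWWfst i' j' μ'' u hu
          have hδ : |p'.1 - xF μ''| ≤ L - 1 := hdd _ (hpD p' hp') _ (hxFD μ'')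
          have hd : m ∣ (pos (Sum.inr ⟨i', j'⟩) + (p'.1 - xF μ'') - pos g) :=
            ⟨ζ - p'.2 - u.2, by linarith⟩
          obtain ⟨hg, hδ0⟩ := spill g (Sum.inr ⟨i', j'⟩) (p'.1 - xF μ'') hδ hd
          right; right
          refine ⟨⟨i', j'⟩, hg, u, ?_, ?_⟩
          · exact hWWsub i' j' μ'' (Set.add_mem_add ⟨hp', by omega⟩ hu)
          · have hsnd : (p' + u).2 = p'.2 + u.2 := rfl
            rw [hsnd]
            refine mul_left_cancel₀ hm0 (show m * ζ = m * (p'.2 + u.2) from ?_)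
            rw [← hg] at heq
            have hpos0 : p'.1 = xF μ'' := by omega
            linarith
        · -- a translate of an infinite column
          obtain ⟨ν, u, hu, rfl⟩ := hUUb
          have hufst : u.1 = xK i' - xK ν := hUUfst i' j' ν u hu
          have hδ : |p'.1 - xK ν| ≤ L - 1 := hdd _ (hpD p' hp') _ (hxKD ν)
          have hd : m ∣ (pos (Sum.inr ⟨i', j'⟩) + (p'.1 - xK ν) - pos g) :=
            ⟨ζ - p'.2 - u.2, by linarith⟩
          obtain ⟨hg, hδ0⟩ := spill g (Sum.inr ⟨i', j'⟩) (p'.1 - xK ν) hδ hd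
          right; right
          refine ⟨⟨i', j'⟩, hg, u, ?_, ?_⟩
          · exact hUUsub i' j' ν (Set.add_mem_add ⟨hp', by omega⟩ hu)
          · have hsnd : (p' + u).2 = p'.2 + u.2 := rfl
            rw [hsnd]
            refine mul_left_cancel₀ hm0 (show m * ζ = m * (p'.2 + u.2) from ?_)
            rw [← hg] at heq
            have hpos0 : p'.1 = xK ν := by omega
            linarith
    intro C' hC' hcontra
    obtain ⟨c, hcC, hcnC'⟩ := Set.exists_of_ssubset hC'
    obtain ⟨p, hp, rfl⟩ := hcC
    have hpd : p.1 ∈ Set.range xF ∪ Set.range xK := by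
      rw [← hcols]; exact hpD p hp
    have hnz : ∃ z : ℤ, ∀ c' ∈ C', ∀ w ∈ Wt, ¬(c' + w = z) := by
      rcases hpd with ⟨μ, hμ⟩ | ⟨i, hi⟩
      · -- finite column
        have hyF : p.2 ∈ {y : ℤ | (xF μ, y) ∈ Chat} := by
          show (xF μ, p.2) ∈ Chat
          rw [hμ]
          simpa using hp
        obtain ⟨ζ, hζV, hζpriv⟩ := hVpriv μ p.2 hyF
        refine ⟨pos (Sum.inl μ) + m * ζ, ?_⟩
        intro c' hc' w hw heq
        obtain ⟨p', hp', rfl⟩ := hC'.subset hc'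
        rcases wstruct w hw p' hp' (Sum.inl μ) ζ heq with
          ⟨μ₂, hg, v, hvV, hfst, hζeq⟩ | ⟨sg, hg, -, -⟩ | ⟨sg, hg, -⟩
        · have hμ2 : μ₂ = μ := Sum.inl.inj hg
          subst hμ2
          have hy'F : p'.2 ∈ {y : ℤ | (xF μ₂, y) ∈ Chat} := by
            show (xF μ₂, p'.2) ∈ Chat
            rw [← hfst]
            simpa using hp'
          by_cases hyy : p'.2 = p.2
          · apply hcnC'
            have hcc : p'.1 + m * p'.2 = p.1 + m * p.2 := by rw [hfst, hyy, hμ]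
            have hc2 : p'.1 + m * p'.2 ∈ C' := hc'
            rwa [hcc] at hc2
          · refine hζpriv p'.2 hy'F hyy ?_
            have hv : ζ - p'.2 = v := by omega
            rwa [hv]
        · cases hg
        · cases hg
      · -- infinite column
        have hpcol : p ∈ ⋃ j, S i j := by
          rw [hScover i]
          exact ⟨hp, hi.symm⟩
        rw [Set.mem_iUnion] at hpcol
        obtain ⟨j, hpS⟩ := hpcol
        refine ⟨pos (Sum.inr ⟨i, j⟩) + m * p.2, ?_⟩
        intro c' hc' w hw heq
        obtain ⟨p', hp', rfl⟩ := hC'.subset hc'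
        rcases wstruct w hw p' hp' (Sum.inr ⟨i, j⟩) p.2 heq with
          ⟨μ₂, hg, -⟩ | ⟨sg, hg, hfst, hζeq⟩ | ⟨sg, hg, u, hlineu, hζeq⟩
        · cases hg
        · have hsg : sg = ⟨i, j⟩ := Sum.inr.inj hg
          subst hsg
          apply hcnC'
          have hcc : p'.1 + m * p'.2 = p.1 + m * p.2 := by
            rw [hfst, ← hζeq, ← hi]
          have hc2 : p'.1 + m * p'.2 ∈ C' := hc'
          rwa [hcc] at hc2
        · have hsg : sg = ⟨i, j⟩ := Sum.inr.inj hg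
          subst hsg
          have h1 : (p' + u).1 = xK i := hlineu.1
          have h2 : (p' + u).2 = p.2 := hζeq.symm
          have hpu : p' + u = p := Prod.ext_iff.mpr ⟨by rw [h1, hi], h2⟩
          exact hlineu.2 (hpu ▸ hpS)
    obtain ⟨z, hz⟩ := hnz
    have hzmem : z ∈ C' + Wt := by rw [hcontra]; exact Set.mem_univ z
    obtain ⟨c', hc', w, hw, hcw⟩ := Set.mem_add.mp hzmem
    exact hz c' hc' w hw hcw
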